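/- Let Q be the equioriented A_n quiver. Two finite-dimensional representations M and N of Q are isomorphic if and only if their rank sequences coincide: r^M_{i,j} = r^N_{i,j} for all 1 ≤ i ≤ j ≤ n. -/

import Mathlib

open Module

open Submodule

namespace IsoRank

variable {X Y Z : Type} [AddCommGroup X] [Module ℂ X] [AddCommGroup Y] [Module ℂ Y]
  [AddCommGroup Z] [Module ℂ Z]

/-- Base lemma: an iso extending a "partial map specification". -/
lemma exists_equiv_comp_eq [FiniteDimensional ℂ X] [FiniteDimensional ℂ Y]
    (F : Z →ₗ[ℂ] X) (Ψ : Z →ₗ[ℂ] Y) (hker : LinearMap.ker F = LinearMap.ker Ψ)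
    (hdim : finrank ℂ X = finrank ℂ Y) :
    ∃ e : X ≃ₗ[ℂ] Y, (e.toLinearMap ∘ₗ F = Ψ) := by
  classical
  obtain ⟨CF, hCF⟩ := (LinearMap.range F).exists_isCompl
  obtain ⟨CΨ, hCΨ⟩ := (LinearMap.range Ψ).exists_isCompl
  let iso₁ : (LinearMap.range F) ≃ₗ[ℂ] (LinearMap.range Ψ) :=
    (F.quotKerEquivRange.symm.trans (Submodule.quotEquivOfEq _ _ hker)).trans
      Ψ.quotKerEquivRange
  have hrk : finrank ℂ (LinearMap.range F) = finrank ℂ (LinearMap.range Ψ) :=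
    iso₁.finrank_eq
  have h1 := Submodule.finrank_add_eq_of_isCompl hCF
  have h2 := Submodule.finrank_add_eq_of_isCompl hCΨ
  have hC : finrank ℂ CF = finrank ℂ CΨ := by omega
  obtain ⟨iso₂⟩ := FiniteDimensional.nonempty_linearEquiv_of_finrank_eq hC
  refine ⟨((Submodule.prodEquivOfIsCompl _ _ hCF).symm.trans
      ((iso₁.prodCongr iso₂).trans (Submodule.prodEquivOfIsCompl _ _ hCΨ))), ?_⟩
  ext z
  have h3 : F z = ((⟨F z, LinearMap.mem_range_self F z⟩ : LinearMap.range F) : X) := rfl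
  have h4 : iso₁ ⟨F z, LinearMap.mem_range_self F z⟩ = ⟨Ψ z, LinearMap.mem_range_self Ψ z⟩ := by
    have : (⟨F z, LinearMap.mem_range_self F z⟩ : LinearMap.range F) =
        F.quotKerEquivRange (Submodule.Quotient.mk z) := by
      ext; simp [LinearMap.quotKerEquivRange_apply_mk]
    simp only [iso₁, LinearEquiv.trans_apply, this, LinearEquiv.symm_apply_apply,
      Submodule.quotEquivOfEq_mk]
    ext; simp [LinearMap.quotKerEquivRange_apply_mk]
  simp only [LinearMap.comp_apply, LinearEquiv.coe_coe, LinearEquiv.trans_apply]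
  rw [h3, Submodule.prodEquivOfIsCompl_symm_apply_left, LinearEquiv.prodCongr_apply]
  simp [h4, Submodule.coe_prodEquivOfIsCompl']

lemma map_eq_of_fix (τ : Y ≃ₗ[ℂ] Y) (S : Submodule ℂ Y) (h : ∀ y ∈ S, τ y = y) :
    S.map τ.toLinearMap = S := by
  apply le_antisymm
  · rintro y ⟨s, hs, rfl⟩; simpa [h s hs] using hs
  · intro y hy; exact ⟨y, hy, h y hy⟩

lemma exists_compl_within {B P : Submodule ℂ X} (h : B ≤ P) :
    ∃ C : Submodule ℂ X, C ≤ P ∧ B ⊓ C = ⊥ ∧ B ⊔ C = P := by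
  obtain ⟨q, hq⟩ := (Submodule.comap P.subtype B).exists_isCompl
  refine ⟨q.map P.subtype, Submodule.map_subtype_le _ _, ?_, ?_⟩
  · apply le_bot_iff.mp
    rintro x ⟨hxB, ⟨y, hy, rfl⟩⟩
    have hm : y ∈ Submodule.comap P.subtype B ⊓ q := ⟨hxB, hy⟩
    rw [hq.inf_eq_bot] at hm
    simp only [Submodule.mem_bot] at hm
    simp [hm]
  · conv_lhs => rw [show B = Submodule.map P.subtype (Submodule.comap P.subtype B) by
      rw [Submodule.map_comap_subtype, inf_of_le_right h]]
    rw [← Submodule.map_sup, hq.sup_eq_top, Submodule.map_subtype_top]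

lemma isCompl_comap_of {D C P : Submodule ℂ X} (hD : D ≤ P) (hC : C ≤ P)
    (hdisj : D ⊓ C = ⊥) (hsup : D ⊔ C = P) :
    IsCompl (Submodule.comap P.subtype D) (Submodule.comap P.subtype C) := by
  constructor
  · rw [disjoint_iff]
    apply le_bot_iff.mp
    rintro x ⟨hx1, hx2⟩
    have : (x : X) ∈ D ⊓ C := ⟨hx1, hx2⟩
    rw [hdisj] at this
    simpa using Subtype.ext (by simpa using this)
  · rw [codisjoint_iff]
    apply le_antisymm le_top
    rintro ⟨x, hx⟩ -
    have hx' : (x : X) ∈ D ⊔ C := by rw [hsup]; exact hx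
    obtain ⟨d, hd, c, hc, hdc⟩ := Submodule.mem_sup.mp hx'
    have hdm : d ∈ P := hD hd
    have hcm : c ∈ P := hC hc
    have hxe : (⟨x, hx⟩ : P) = ⟨d, hdm⟩ + ⟨c, hcm⟩ := by
      ext; simp [← hdc]
    rw [hxe]
    exact Submodule.add_mem _ (Submodule.mem_sup_left (by simpa using hd))
      (Submodule.mem_sup_right (by simpa using hc))




lemma map_eq_of_fix' (τ : Y ≃ₗ[ℂ] Y) (S : Submodule ℂ Y) (h : ∀ y ∈ S, τ y = y) :
    S.map τ.toLinearMap = S := by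
  apply le_antisymm
  · rintro y ⟨s, hs, rfl⟩; simpa [h s hs] using hs
  · intro y hy; exact ⟨y, hy, h y hy⟩

/-- There is an automorphism of `Y` fixing `D` pointwise and carrying `P` to `P'`,
provided `P ⊓ D = P' ⊓ D` and `P, P'` have the same dimension. -/
lemma exists_fixing_equiv [FiniteDimensional ℂ Y] (D P P' : Submodule ℂ Y)
    (hPD : P ⊓ D = P' ⊓ D) (hdim : finrank ℂ P = finrank ℂ P') :
    ∃ τ : Y ≃ₗ[ℂ] Y, (∀ y ∈ D, τ y = y) ∧ P.map τ.toLinearMap = P' := by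
  classical
  set B : Submodule ℂ Y := P ⊓ D with hB
  obtain ⟨C, hCP, hBC, hBCP⟩ := exists_compl_within (inf_le_left : B ≤ P)
  obtain ⟨C', hCP', hBC', hBCP'⟩ := exists_compl_within (hPD ▸ (inf_le_left : P' ⊓ D ≤ P'))
  -- D ⊓ C = ⊥ and D ⊓ C' = ⊥
  have hDC : D ⊓ C = ⊥ := by
    apply le_bot_iff.mp
    intro x hx
    have : x ∈ B ⊓ C := ⟨⟨hCP hx.2, hx.1⟩, hx.2⟩
    rwa [hBC] at this
  have hDC' : D ⊓ C' = ⊥ := by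
    apply le_bot_iff.mp
    intro x hx
    have hx' : x ∈ B ⊓ C' := by
      constructor
      · rw [hPD]; exact ⟨hCP' hx.2, hx.1⟩
      · exact hx.2
    rwa [hBC'] at hx'
  obtain ⟨R, hR⟩ := (D ⊔ C).exists_isCompl
  obtain ⟨R', hR'⟩ := (D ⊔ C').exists_isCompl
  -- dimension bookkeeping
  have hfBC : finrank ℂ B + finrank ℂ C = finrank ℂ P := by
    have := Submodule.finrank_sup_add_finrank_inf_eq B C
    rw [hBC, hBCP] at this
    simpa using this.symm
  have hfBC' : finrank ℂ B + finrank ℂ C' = finrank ℂ P' := by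
    have := Submodule.finrank_sup_add_finrank_inf_eq B C'
    rw [hBC', hBCP'] at this
    simpa using this.symm
  have hfC : finrank ℂ C = finrank ℂ C' := by omega
  have hfDC : finrank ℂ (D ⊔ C : Submodule ℂ Y) = finrank ℂ D + finrank ℂ C := by
    have := Submodule.finrank_sup_add_finrank_inf_eq D C
    rw [hDC] at this; simpa using this
  have hfDC' : finrank ℂ (D ⊔ C' : Submodule ℂ Y) = finrank ℂ D + finrank ℂ C' := by
    have := Submodule.finrank_sup_add_finrank_inf_eq D C'
    rw [hDC'] at this; simpa using this
  have hfR : finrank ℂ R = finrank ℂ R' := by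
    have h1 := Submodule.finrank_add_eq_of_isCompl hR
    have h2 := Submodule.finrank_add_eq_of_isCompl hR'
    omega
  obtain ⟨ρ⟩ := FiniteDimensional.nonempty_linearEquiv_of_finrank_eq hfR
  -- inner equivalence σ : ↥(D ⊔ C) ≃ ↥(D ⊔ C')
  have hcompl₁ := isCompl_comap_of (le_sup_left : D ≤ D ⊔ C) le_sup_right hDC rfl
  have hcompl₁' := isCompl_comap_of (le_sup_left : D ≤ D ⊔ C') le_sup_right hDC' rfl
  let δ : (Submodule.comap (D ⊔ C).subtype D) ≃ₗ[ℂ] (Submodule.comap (D ⊔ C').subtype D) :=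
    (Submodule.comapSubtypeEquivOfLe le_sup_left).trans
      (Submodule.comapSubtypeEquivOfLe le_sup_left).symm
  have hfC₁ : finrank ℂ (Submodule.comap (D ⊔ C).subtype C) =
      finrank ℂ (Submodule.comap (D ⊔ C').subtype C') := by
    rw [(Submodule.comapSubtypeEquivOfLe (le_sup_right : C ≤ D ⊔ C)).finrank_eq,
      (Submodule.comapSubtypeEquivOfLe (le_sup_right : C' ≤ D ⊔ C')).finrank_eq, hfC]
  obtain ⟨γ⟩ := FiniteDimensional.nonempty_linearEquiv_of_finrank_eq hfC₁
  let σ : (D ⊔ C : Submodule ℂ Y) ≃ₗ[ℂ] (D ⊔ C' : Submodule ℂ Y) :=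
    (Submodule.prodEquivOfIsCompl _ _ hcompl₁).symm.trans
      ((δ.prodCongr γ).trans (Submodule.prodEquivOfIsCompl _ _ hcompl₁'))
  -- σ fixes D pointwise (in coordinates)
  have hσD : ∀ (x : (D ⊔ C : Submodule ℂ Y)), (x : Y) ∈ D → ((σ x : (D ⊔ C' : Submodule ℂ Y)) : Y) = x := by
    intro x hx
    have hx₁ : x ∈ Submodule.comap (D ⊔ C).subtype D := hx
    have h1 : (Submodule.prodEquivOfIsCompl _ _ hcompl₁).symm x = (⟨x, hx₁⟩, 0) :=
      Submodule.prodEquivOfIsCompl_symm_apply_left _ _ hcompl₁ ⟨x, hx₁⟩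
    simp only [σ, LinearEquiv.trans_apply, h1, LinearEquiv.prodCongr_apply, map_zero,
      Submodule.coe_prodEquivOfIsCompl']
    simp [δ]
  have hσC : ∀ (x : (D ⊔ C : Submodule ℂ Y)), (x : Y) ∈ C → ((σ x : (D ⊔ C' : Submodule ℂ Y)) : Y) ∈ C' := by
    intro x hx
    have hx₁ : x ∈ Submodule.comap (D ⊔ C).subtype C := hx
    have h1 : (Submodule.prodEquivOfIsCompl _ _ hcompl₁).symm x = (0, ⟨x, hx₁⟩) :=
      Submodule.prodEquivOfIsCompl_symm_apply_right _ _ hcompl₁ ⟨x, hx₁⟩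
    simp only [σ, LinearEquiv.trans_apply, h1, LinearEquiv.prodCongr_apply, map_zero,
      Submodule.coe_prodEquivOfIsCompl', ZeroMemClass.coe_zero, zero_add]
    exact (γ ⟨x, hx₁⟩).2
  -- the automorphism
  let τ : Y ≃ₗ[ℂ] Y :=
    (Submodule.prodEquivOfIsCompl _ _ hR).symm.trans
      ((σ.prodCongr ρ).trans (Submodule.prodEquivOfIsCompl _ _ hR'))
  have hτ : ∀ (y : Y) (hy : y ∈ D ⊔ C), τ y = ((σ ⟨y, hy⟩ : (D ⊔ C' : Submodule ℂ Y)) : Y) := by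
    intro y hy
    have h1 : (Submodule.prodEquivOfIsCompl _ _ hR).symm y = (⟨y, hy⟩, 0) :=
      Submodule.prodEquivOfIsCompl_symm_apply_left _ _ hR ⟨y, hy⟩
    simp only [τ, LinearEquiv.trans_apply, h1, LinearEquiv.prodCongr_apply, map_zero,
      Submodule.coe_prodEquivOfIsCompl']
    simp
  have hτD : ∀ y ∈ D, τ y = y := by
    intro y hy
    have hy' : y ∈ D ⊔ C := Submodule.mem_sup_left hy
    rw [hτ y hy', hσD _ hy]
  refine ⟨τ, hτD, ?_⟩
  -- map τ P = P'
  have hmapB : B.map τ.toLinearMap = B := map_eq_of_fix' τ B (fun y hy => hτD y hy.2)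
  have hmapC : C.map τ.toLinearMap ≤ C' := by
    rintro y ⟨c, hc, rfl⟩
    have hc' : c ∈ D ⊔ C := Submodule.mem_sup_right hc
    rw [LinearEquiv.coe_coe, hτ c hc']
    exact hσC _ hc
  have hmapC' : C.map τ.toLinearMap = C' := by
    apply Submodule.eq_of_le_of_finrank_eq hmapC
    rw [LinearEquiv.finrank_map_eq, hfC]
  have hPBC : P = B ⊔ C := hBCP.symm
  rw [hPBC, Submodule.map_sup, hmapB, hmapC']
  exact hBCP'

variable {Z' X' Y'' : Type} [AddCommGroup Z'] [Module ℂ Z'] [AddCommGroup X'] [Module ℂ X']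
  [AddCommGroup Y''] [Module ℂ Y'']

/-- Flag extension lemma: given compatible flags and a partial map specification,
there is an isomorphism intertwining `F` and `Ψ` and carrying the flag `K` to `K'`. -/
lemma flag_extend [FiniteDimensional ℂ X'] [FiniteDimensional ℂ Y'']
    (F : Z' →ₗ[ℂ] X') (Ψ : Z' →ₗ[ℂ] Y'')
    (K : ℕ → Submodule ℂ X') (K' : ℕ → Submodule ℂ Y'')
    (hmK : Monotone K) (hmK' : Monotone K')
    (h0 : K 0 = ⊥) (h0' : K' 0 = ⊥) (N : ℕ) (hN : K N = ⊤) (hN' : K' N = ⊤)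
    (hdim : ∀ j, finrank ℂ (K j) = finrank ℂ (K' j))
    (hcom : ∀ j, (K j).comap F = (K' j).comap Ψ) :
    ∃ e : X' ≃ₗ[ℂ] Y'', (e.toLinearMap ∘ₗ F = Ψ) ∧
      ∀ j, (K j).map e.toLinearMap = K' j := by
  classical
  have hXY : finrank ℂ X' = finrank ℂ Y'' := by
    have := hdim N
    rw [hN, hN'] at this
    simpa [finrank_top] using this
  have main : ∀ j : ℕ, ∃ e : X' ≃ₗ[ℂ] Y'', (e.toLinearMap ∘ₗ F = Ψ) ∧
      ∀ i ≤ j, (K i).map e.toLinearMap = K' i := by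
    intro j
    induction j with
    | zero =>
      have hker : LinearMap.ker F = LinearMap.ker Ψ := by
        have := hcom 0
        rwa [h0, h0', Submodule.comap_bot, Submodule.comap_bot] at this
      obtain ⟨e, he⟩ := exists_equiv_comp_eq F Ψ hker hXY
      refine ⟨e, he, ?_⟩
      intro i hi
      interval_cases i
      rw [h0, h0', Submodule.map_bot]
    | succ j ih =>
      obtain ⟨e, hcomp, hmaps⟩ := ih
      set D : Submodule ℂ Y'' := K' j ⊔ LinearMap.range Ψ with hD
      have hrange : (LinearMap.range F).map e.toLinearMap = LinearMap.range Ψ := by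
        rw [← LinearMap.range_comp, hcomp]
      have key : ((K (j+1)) ⊓ LinearMap.range F).map e.toLinearMap =
          K' (j+1) ⊓ LinearMap.range Ψ := by
        have h1 : K' (j+1) ⊓ LinearMap.range Ψ = (LinearMap.range Ψ) ⊓ K' (j+1) := inf_comm _ _
        rw [h1, ← Submodule.map_comap_eq Ψ (K' (j+1)), ← hcom (j+1), ← hcomp,
          Submodule.map_comp, Submodule.map_comap_eq]
        exact congrArg _ (inf_comm _ _)
      have hPD : ((K (j+1)).map e.toLinearMap) ⊓ D = K' (j+1) ⊓ D := by
        have hmod : (K' j ⊔ LinearMap.range Ψ) ⊓ K' (j+1) =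
            K' j ⊔ (LinearMap.range Ψ ⊓ K' (j+1)) :=
          sup_inf_assoc_of_le _ (hmK' (Nat.le_succ j))
        have hmod' : (K j ⊔ LinearMap.range F) ⊓ K (j+1) =
            K j ⊔ (LinearMap.range F ⊓ K (j+1)) :=
          sup_inf_assoc_of_le _ (hmK (Nat.le_succ j))
        have hinj : Function.Injective e.toLinearMap := e.injective
        have hL : ((K (j+1)).map e.toLinearMap) ⊓ D =
            ((K (j+1)) ⊓ (K j ⊔ LinearMap.range F)).map e.toLinearMap := by
          rw [Submodule.map_inf e.toLinearMap hinj, Submodule.map_sup, hrange,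
            hmaps j le_rfl, hD]
        calc ((K (j+1)).map e.toLinearMap) ⊓ D
            = ((K (j+1)) ⊓ (K j ⊔ LinearMap.range F)).map e.toLinearMap := hL
          _ = (K j ⊔ (LinearMap.range F ⊓ K (j+1))).map e.toLinearMap := by
              rw [inf_comm (K (j+1)) (K j ⊔ LinearMap.range F), hmod']
          _ = K' j ⊔ ((LinearMap.range F ⊓ K (j+1)).map e.toLinearMap) := by
              rw [Submodule.map_sup, hmaps j le_rfl]
          _ = K' j ⊔ (LinearMap.range Ψ ⊓ K' (j+1)) := by
              rw [inf_comm (LinearMap.range F) (K (j+1)), key,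
                inf_comm (K' (j+1)) (LinearMap.range Ψ)]
          _ = K' (j+1) ⊓ D := by
              rw [hD, ← hmod, inf_comm (K' j ⊔ LinearMap.range Ψ) (K' (j+1))]
      have hdimP : finrank ℂ ((K (j+1)).map e.toLinearMap) = finrank ℂ (K' (j+1)) := by
        rw [LinearEquiv.finrank_map_eq]
        exact hdim (j+1)
      obtain ⟨τ, hfix, hmap⟩ := exists_fixing_equiv D _ _ hPD hdimP
      refine ⟨e.trans τ, ?_, ?_⟩
      · ext z
        simp only [LinearMap.comp_apply, LinearEquiv.coe_coe, LinearEquiv.trans_apply]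
        have hz : e (F z) = Ψ z := by
          have := congrArg (fun (φ : Z' →ₗ[ℂ] Y'') => φ z) hcomp
          simpa using this
        rw [hz]
        exact hfix _ (Submodule.mem_sup_right (LinearMap.mem_range_self Ψ z))
      · intro i hi
        have htrans : (K i).map (e.trans τ).toLinearMap =
            ((K i).map e.toLinearMap).map τ.toLinearMap := by
          rw [← Submodule.map_comp]; rfl
        rcases eq_or_lt_of_le hi with h | h
        · subst h
          rw [htrans, hmap]
        · have hij : i ≤ j := Nat.lt_succ_iff.mp h
          rw [htrans, hmaps i hij]
          apply map_eq_of_fix'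
          intro y hy
          exact hfix y (Submodule.mem_sup_left ((hmK' hij) hy))
  obtain ⟨e, hcomp, hmaps⟩ := main N
  refine ⟨e, hcomp, fun j => ?_⟩
  rcases le_or_gt j N with h | h
  · exact hmaps j h
  · have hKj : K j = ⊤ := le_antisymm le_top (hN ▸ hmK h.le)
    have hKj' : K' j = ⊤ := le_antisymm le_top (hN' ▸ hmK' h.le)
    rw [hKj, hKj', Submodule.map_top, LinearEquiv.range]

end IsoRank

set_option linter.unusedSectionVars false

section

variable (V : ℕ → Type) [∀ m, AddCommGroup (V m)] [∀ m, Module ℂ (V m)]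
  [∀ m, FiniteDimensional ℂ (V m)]

/-- The composite `f_{i+k-1} ∘ ⋯ ∘ f_i : V i → V (i+k)` of the structure maps. -/
def chainComp (f : ∀ m, V m →ₗ[ℂ] V (m + 1)) : ∀ (i k : ℕ), V i →ₗ[ℂ] V (i + k)
  | _, 0 => LinearMap.id
  | i, k + 1 => (f (i + k)).comp (chainComp f i k)

/-- The rank sequence `r^M_{i,j} = rank (f_{j−1} ∘ ⋯ ∘ f_i)` (with `r_{i,i} = dim M_i`). -/
noncomputable def rkSeq (f : ∀ m, V m →ₗ[ℂ] V (m + 1)) (i j : ℕ) : ℕ :=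
  Module.finrank ℂ (LinearMap.range (chainComp V f i (j - i)))

namespace IsoRank

lemma cast_apply_eq (f : ∀ m, V m →ₗ[ℂ] V (m + 1)) {a b : ℕ} (h : a = b) (x : V a) :
    f b (cast (congrArg V h) x) = cast (congrArg V (congrArg Nat.succ h)) (f a x) := by
  subst h; rfl

lemma chain_succ_left (f : ∀ m, V m →ₗ[ℂ] V (m + 1)) :
    ∀ (k i : ℕ) (x : V i), chainComp V f i (k + 1) x =
      cast (congrArg V (Nat.succ_add i k)) (chainComp V f (i + 1) k (f i x)) := by
  intro k
  induction k with
  | zero =>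
    intro i x
    have h1 : chainComp V f i 1 x = f i x := rfl
    rw [h1]
    exact (eq_of_heq (cast_heq _ _)).symm
  | succ k ih =>
    intro i x
    have h1 : chainComp V f i (k + 2) x = f (i + (k + 1)) (chainComp V f i (k + 1) x) := rfl
    have h2 : chainComp V f (i + 1) (k + 1) (f i x) =
        f ((i + 1) + k) (chainComp V f (i + 1) k (f i x)) := rfl
    rw [h1, ih i x, h2]
    exact cast_apply_eq V f (Nat.succ_add i k) (chainComp V f (i + 1) k (f i x))

lemma cast_eq_zero_iff {a b : ℕ} (h : a = b) (y : V a) :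
    cast (congrArg V h) y = 0 ↔ y = 0 := by
  subst h; rfl

lemma ker_chain_succ (f : ∀ m, V m →ₗ[ℂ] V (m + 1)) (i k : ℕ) :
    LinearMap.ker (chainComp V f i (k + 1)) =
      (LinearMap.ker (chainComp V f (i + 1) k)).comap (f i) := by
  ext x
  simp only [LinearMap.mem_ker, Submodule.mem_comap]
  rw [chain_succ_left V f k i x, cast_eq_zero_iff V (Nat.succ_add i k)]

lemma chain_ker_le_succ (f : ∀ m, V m →ₗ[ℂ] V (m + 1)) (i k : ℕ) :
    LinearMap.ker (chainComp V f i k) ≤ LinearMap.ker (chainComp V f i (k + 1)) := by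
  intro x hx
  have h1 : chainComp V f i (k + 1) x = f (i + k) (chainComp V f i k x) := rfl
  simp only [LinearMap.mem_ker] at *
  rw [h1, hx, map_zero]

lemma chain_ker_eq_top (f : ∀ m, V m →ₗ[ℂ] V (m + 1)) (i k : ℕ)
    (h : Subsingleton (V (i + k))) : LinearMap.ker (chainComp V f i k) = ⊤ := by
  apply eq_top_iff.mpr
  intro x _
  simp only [LinearMap.mem_ker]
  exact Subsingleton.elim _ _

lemma chain_zero_eq (f : ∀ m, V m →ₗ[ℂ] V (m + 1)) (i : ℕ) :
    chainComp V f i 0 = LinearMap.id := rfl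

lemma rkSeq_add (f : ∀ m, V m →ₗ[ℂ] V (m + 1)) (i k : ℕ) :
    rkSeq V f i (i + k) = Module.finrank ℂ (LinearMap.range (chainComp V f i k)) :=
  congrArg (fun k' => Module.finrank ℂ (LinearMap.range (chainComp V f i k')))
    (show i + k - i = k by omega)

lemma rkSeq_diag (f : ∀ m, V m →ₗ[ℂ] V (m + 1)) (i : ℕ) :
    rkSeq V f i i = Module.finrank ℂ (V i) := by
  have h := rkSeq_add V f i 0
  rw [chain_zero_eq V f i, LinearMap.range_id, finrank_top] at h
  exact h

end IsoRank


/-- two representations of the equioriented `A_n` quiver (chains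
supported on vertices `1,…,n`) are isomorphic iff their rank sequences coincide. -/
theorem iso_iff_rank_sequences_eq (n : ℕ)
    (W : ℕ → Type) [∀ m, AddCommGroup (W m)] [∀ m, Module ℂ (W m)]
    [∀ m, FiniteDimensional ℂ (W m)]
    (f : ∀ m, V m →ₗ[ℂ] V (m + 1)) (g : ∀ m, W m →ₗ[ℂ] W (m + 1))
    (hV : ∀ m, m = 0 ∨ n < m → Subsingleton (V m))
    (hW : ∀ m, m = 0 ∨ n < m → Subsingleton (W m)) :
    (∃ e : ∀ m, V m ≃ₗ[ℂ] W m,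
        ∀ m, ((e (m + 1) : V (m + 1) →ₗ[ℂ] W (m + 1)).comp (f m)) =
          (g m).comp (e m : V m →ₗ[ℂ] W m)) ↔
      (∀ i j : ℕ, 1 ≤ i → i ≤ j → j ≤ n → rkSeq V f i j = rkSeq W g i j) := by
  classical
  constructor
  · rintro ⟨e, he⟩ i j _ _ _
    have key : ∀ (i k : ℕ), (e (i + k)).toLinearMap ∘ₗ chainComp V f i k =
        (chainComp W g i k) ∘ₗ (e i).toLinearMap := by
      intro i k
      induction k with
      | zero => rfl
      | succ k ih =>
        have h1 : chainComp V f i (k + 1) = (f (i + k)).comp (chainComp V f i k) := rfl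
        have h2 : chainComp W g i (k + 1) = (g (i + k)).comp (chainComp W g i k) := rfl
        show (e (i + k + 1)).toLinearMap ∘ₗ chainComp V f i (k + 1) =
          chainComp W g i (k + 1) ∘ₗ (e i).toLinearMap
        rw [h1, h2, ← LinearMap.comp_assoc, he (i + k), LinearMap.comp_assoc, ih,
          ← LinearMap.comp_assoc]
    have hrange : LinearMap.range (chainComp W g i (j - i)) =
        (LinearMap.range (chainComp V f i (j - i))).map (e (i + (j - i))).toLinearMap := by
      rw [← LinearMap.range_comp, key i (j - i), LinearMap.range_comp,
        LinearEquiv.range, Submodule.map_top]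
    simp only [rkSeq]
    rw [hrange, LinearEquiv.finrank_map_eq]
  · intro hr
    have hdimVW : ∀ i, 1 ≤ i → i ≤ n → finrank ℂ (V i) = finrank ℂ (W i) := by
      intro i h1 h2
      have h3 := hr i i h1 le_rfl h2
      rwa [IsoRank.rkSeq_diag V f i, IsoRank.rkSeq_diag W g i] at h3
    have hstep : ∀ m (em : V m ≃ₗ[ℂ] W m),
        (∀ k, (LinearMap.ker (chainComp W g m k)).comap em.toLinearMap =
          LinearMap.ker (chainComp V f m k)) →
        ∃ e' : V (m + 1) ≃ₗ[ℂ] W (m + 1),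
          (∀ k, (LinearMap.ker (chainComp W g (m + 1) k)).comap e'.toLinearMap =
            LinearMap.ker (chainComp V f (m + 1) k)) ∧
          e'.toLinearMap ∘ₗ f m = (g m) ∘ₗ em.toLinearMap := by
      intro m em hinv
      by_cases hmn : m + 1 ≤ n
      · have hrkflag : ∀ j, m + 1 + j ≤ n →
            finrank ℂ (LinearMap.range (chainComp V f (m + 1) j)) =
            finrank ℂ (LinearMap.range (chainComp W g (m + 1) j)) := by
          intro j hj
          have h3 := hr (m + 1) (m + 1 + j) (by omega) (by omega) hj
          rwa [IsoRank.rkSeq_add V f (m + 1) j, IsoRank.rkSeq_add W g (m + 1) j] at h3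
        have hdimflag : ∀ j, finrank ℂ (LinearMap.ker (chainComp V f (m + 1) j)) =
            finrank ℂ (LinearMap.ker (chainComp W g (m + 1) j)) := by
          intro j
          rcases le_or_gt (m + 1 + j) n with hj | hj
          · have h1 := LinearMap.finrank_range_add_finrank_ker (chainComp V f (m + 1) j)
            have h2 := LinearMap.finrank_range_add_finrank_ker (chainComp W g (m + 1) j)
            have h3 := hrkflag j hj
            have h4 := hdimVW (m + 1) (by omega) hmn
            omega
          · rw [IsoRank.chain_ker_eq_top V f _ _ (hV _ (Or.inr (by omega))),
              IsoRank.chain_ker_eq_top W g _ _ (hW _ (Or.inr (by omega))),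
              finrank_top, finrank_top]
            exact hdimVW (m + 1) (by omega) hmn
        have hcomflag : ∀ j, (LinearMap.ker (chainComp V f (m + 1) j)).comap (f m) =
            (LinearMap.ker (chainComp W g (m + 1) j)).comap ((g m) ∘ₗ em.toLinearMap) := by
          intro j
          rw [← IsoRank.ker_chain_succ V f m j, Submodule.comap_comp,
            ← IsoRank.ker_chain_succ W g m j]
          exact (hinv (j + 1)).symm
        obtain ⟨e', hcomp, hmaps⟩ := IsoRank.flag_extend (f m) ((g m) ∘ₗ em.toLinearMap)
          (fun k => LinearMap.ker (chainComp V f (m + 1) k))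
          (fun k => LinearMap.ker (chainComp W g (m + 1) k))
          (monotone_nat_of_le_succ (fun k => IsoRank.chain_ker_le_succ V f (m + 1) k))
          (monotone_nat_of_le_succ (fun k => IsoRank.chain_ker_le_succ W g (m + 1) k))
          (by show LinearMap.ker (chainComp V f (m + 1) 0) = ⊥
              rw [IsoRank.chain_zero_eq V f (m + 1)]; exact LinearMap.ker_id)
          (by show LinearMap.ker (chainComp W g (m + 1) 0) = ⊥
              rw [IsoRank.chain_zero_eq W g (m + 1)]; exact LinearMap.ker_id)
          (n + 1)
          (IsoRank.chain_ker_eq_top V f (m + 1) (n + 1) (hV _ (Or.inr (by omega))))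
          (IsoRank.chain_ker_eq_top W g (m + 1) (n + 1) (hW _ (Or.inr (by omega))))
          hdimflag hcomflag
        refine ⟨e', ?_, hcomp⟩
        intro k
        rw [← hmaps k]
        exact Submodule.comap_map_eq_of_injective (f := e'.toLinearMap)
          (show Function.Injective e'.toLinearMap from e'.injective) _
      · haveI h1 := hV (m + 1) (Or.inr (by omega))
        haveI h2 := hW (m + 1) (Or.inr (by omega))
        have hd : finrank ℂ (V (m + 1)) = finrank ℂ (W (m + 1)) := by
          rw [finrank_zero_of_subsingleton, finrank_zero_of_subsingleton]
        obtain ⟨e'⟩ := FiniteDimensional.nonempty_linearEquiv_of_finrank_eq hd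
        refine ⟨e', ?_, ?_⟩
        · intro k
          apply Submodule.ext
          intro x
          have hx : x = 0 := Subsingleton.elim x 0
          subst hx
          simp
        · ext z
          exact Subsingleton.elim _ _
    haveI hV0 := hV 0 (Or.inl rfl)
    haveI hW0 := hW 0 (Or.inl rfl)
    have hd0 : finrank ℂ (V 0) = finrank ℂ (W 0) := by
      rw [finrank_zero_of_subsingleton, finrank_zero_of_subsingleton]
    obtain ⟨e₀⟩ := FiniteDimensional.nonempty_linearEquiv_of_finrank_eq hd0
    have hinv0 : ∀ k, (LinearMap.ker (chainComp W g 0 k)).comap e₀.toLinearMap =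
        LinearMap.ker (chainComp V f 0 k) := by
      intro k
      apply Submodule.ext
      intro x
      have hx : x = 0 := Subsingleton.elim x 0
      subst hx
      simp
    let E : ∀ m, {p : V m ≃ₗ[ℂ] W m //
        ∀ k, (LinearMap.ker (chainComp W g m k)).comap p.toLinearMap =
          LinearMap.ker (chainComp V f m k)} := fun m =>
      Nat.rec ⟨e₀, hinv0⟩
        (fun m p => ⟨(hstep m p.1 p.2).choose, (hstep m p.1 p.2).choose_spec.1⟩) m
    exact ⟨fun m => (E m).1, fun m => (hstep m (E m).1 (E m).2).choose_spec.2⟩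

end
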